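/- For integers a ≥ b ≥ c ≥ 0 with a and b odd and c even: s_{(a,b,c)}(x, -x, y) = - s_{((b-1)/2, c/2)}(x², y²) · s_{((a+1)/2)}(x²). -/
import Mathlib


/-- Schur polynomial in 3 variables via the bialternant formula
`det(v_i^{μ_j + 3 - j}) / det(v_i^{3 - j})` (1-indexed `j`). -/
noncomputable def schur3 {F : Type*} [Field F] (μ : Fin 3 → ℕ) (v : Fin 3 → F) : F :=
  Matrix.det (Matrix.of fun i j : Fin 3 => v i ^ (μ j + (2 - (j : ℕ)))) /
    Matrix.det (Matrix.of fun i j : Fin 3 => v i ^ (2 - (j : ℕ)))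

/-- Schur polynomial in 2 variables via the bialternant formula. -/
noncomputable def schur2 {F : Type*} [Field F] (μ : Fin 2 → ℕ) (v : Fin 2 → F) : F :=
  Matrix.det (Matrix.of fun i j : Fin 2 => v i ^ (μ j + (1 - (j : ℕ)))) /
    Matrix.det (Matrix.of fun i j : Fin 2 => v i ^ (1 - (j : ℕ)))

/-- for `a ≥ b ≥ c ≥ 0` with `a, b` odd and `c` even (empty 2-core),
`s_{(a,b,c)}(x,-x,y) = - s_{((b-1)/2, c/2)}(x²,y²) · s_{((a+1)/2)}(x²)`. -/
theorem schur_spec_odd_odd_even {F : Type*} [Field F] (x y : F) (h2 : (2 : F) ≠ 0)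
    (hx : x ≠ 0) (hxy : x ≠ y) (hxy' : x ≠ -y)
    (a b c : ℕ) (hab : b ≤ a) (hbc : c ≤ b)
    (ha : Odd a) (hb : Odd b) (hc : Even c) :
    schur3 ![a, b, c] ![x, -x, y] =
      - (schur2 ![(b - 1) / 2, c / 2] ![x ^ 2, y ^ 2] * (x ^ 2) ^ ((a + 1) / 2)) := by
  obtain ⟨A, rfl⟩ := ha
  obtain ⟨B, rfl⟩ := hb
  obtain ⟨C, rfl⟩ := hc
  have hb1 : (2 * B + 1 - 1) / 2 = B := by omega
  have hc1 : (C + C) / 2 = C := by omega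
  have ha1 : (2 * A + 1 + 1) / 2 = A + 1 := by omega
  rw [hb1, hc1, ha1]
  have hxmy : x - y ≠ 0 := sub_ne_zero.mpr hxy
  have hxpy : x + y ≠ 0 := fun h => hxy' (eq_neg_of_add_eq_zero_left h)
  unfold schur3 schur2
  simp only [Matrix.det_fin_three, Matrix.det_fin_two, Matrix.of_apply,
    Matrix.cons_val', Matrix.cons_val_zero, Matrix.cons_val_one, Matrix.head_cons,
    Matrix.cons_val_two, Matrix.tail_cons, Matrix.head_fin_const, Matrix.empty_val',
    Matrix.cons_val_fin_one, Fin.isValue, Fin.val_zero, Fin.val_one, Fin.val_two,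
    Nat.sub_zero, Nat.sub_self, Nat.reduceSub, pow_zero, pow_one, neg_sq,
    Nat.add_zero, mul_one, one_mul]
  rw [show (-x)^(2*A+1+2) = -x^(2*A+1+2) from Odd.neg_pow ⟨A+1, by ring⟩ x,
      show (-x)^(2*B+1+1) = x^(2*B+1+1) from Even.neg_pow ⟨B+1, by ring⟩ x,
      show (-x)^(C+C) = x^(C+C) from Even.neg_pow ⟨C, rfl⟩ x,
      div_mul_eq_mul_div, ← neg_div, div_eq_div_iff ?h1 ?h2]
  · ring
  case h1 =>
    have hE : (-2 : F) * (x * ((x - y) * (x + y))) ≠ 0 :=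
      mul_ne_zero (neg_ne_zero.mpr h2) (mul_ne_zero hx (mul_ne_zero hxmy hxpy))
    intro h
    exact hE (by linear_combination h)
  case h2 =>
    have hE : (x - y) * (x + y) ≠ 0 := mul_ne_zero hxmy hxpy
    intro h
    exact hE (by linear_combination h)
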